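/- For any H, R, F ∈ K = ℂ(x,y) with dF ∧ dR = 0, the triple of rational 1-forms (dH + (F − H²/2)·dR, H·dR, dR) is a projective triple. (This is the normal form of a rational pull-back of the Riccati foliation dy − (y²/2 − φ(x))dx.) -/
import Mathlib
set_option maxHeartbeats 1000000
set_option synthInstance.maxHeartbeats 400000


open MvPolynomial

noncomputable section

/-- The field of rational functions `ℂ(x,y)`. -/
abbrev RatF : Type := FractionRing (MvPolynomial (Fin 2) ℂ)

/-- Wedge product of two rational 1-forms: `ω ∧ θ = ω₁ θ₂ - ω₂ θ₁`. -/
def wedge (ω θ : RatF × RatF) : RatF := ω.1 * θ.2 - ω.2 * θ.1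

/-- Exterior derivative of a rational 1-form: `dω = ∂x ω₂ - ∂y ω₁`. -/
def extd (dx dy : Derivation ℂ RatF RatF) (ω : RatF × RatF) : RatF := dx ω.2 - dy ω.1

/-- Differential of a rational function: `dF = (∂x F, ∂y F)`. -/
def d0 (dx dy : Derivation ℂ RatF RatF) (F : RatF) : RatF × RatF := (dx F, dy F)

/-- The derivations `dx`, `dy` extend the partial derivatives on `ℂ[x,y]`. -/
def ExtendsPartials (dx dy : Derivation ℂ RatF RatF) : Prop :=
  (∀ p : MvPolynomial (Fin 2) ℂ,
      dx (algebraMap (MvPolynomial (Fin 2) ℂ) RatF p)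
        = algebraMap (MvPolynomial (Fin 2) ℂ) RatF (pderiv 0 p)) ∧
  (∀ p : MvPolynomial (Fin 2) ℂ,
      dy (algebraMap (MvPolynomial (Fin 2) ℂ) RatF p)
        = algebraMap (MvPolynomial (Fin 2) ℂ) RatF (pderiv 1 p))

/-- `(Ω, η, ξ)` is a projective triple: (Proj.1) `dΩ = η∧Ω`, (Proj.2) `dη = Ω∧ξ`,
(Proj.3) `dξ = ξ∧η`. -/
def IsProjTriple (dx dy : Derivation ℂ RatF RatF) (Ω η ξ : RatF × RatF) : Prop :=
  extd dx dy Ω = wedge η Ω ∧ extd dx dy η = wedge Ω ξ ∧ extd dx dy ξ = wedge ξ η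

/-- A derivation of `ℂ(x,y)` vanishing on `ℂ[x,y]` vanishes everywhere. -/
lemma deriv_eq_zero_of_vanish_poly (D : Derivation ℂ RatF RatF)
    (h : ∀ p : MvPolynomial (Fin 2) ℂ, D (algebraMap (MvPolynomial (Fin 2) ℂ) RatF p) = 0)
    (z : RatF) : D z = 0 := by
  obtain ⟨p, q, hq, rfl⟩ := IsFractionRing.div_surjective (A := MvPolynomial (Fin 2) ℂ) z
  rw [Derivation.leibniz_div, h, h]
  simp

lemma pderiv_comm' (i j : Fin 2) (p : MvPolynomial (Fin 2) ℂ) :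
    pderiv i (pderiv j p) = pderiv j (pderiv i p) := by
  have hX : ∀ (a b : Fin 2) (n : Fin 2),
      pderiv a (pderiv b (X n : MvPolynomial (Fin 2) ℂ)) = 0 := by
    intro a b n
    by_cases h : n = b
    · subst h; simp [pderiv_X_self]
    · simp [pderiv_X_of_ne h]
  induction p using MvPolynomial.induction_on with
  | C a => simp
  | add p q hp hq => simp [hp, hq]
  | mul_X p n hp =>
      simp only [pderiv_mul, map_add, hp, hX, mul_zero, add_zero]
      ring

/-- Mixed partials commute on `ℂ(x,y)`. -/
lemma mixed_partials (dx dy : Derivation ℂ RatF RatF) (hext : ExtendsPartials dx dy)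
    (f : RatF) : dx (dy f) = dy (dx f) := by
  have h : ⁅dx, dy⁆ f = 0 := by
    apply deriv_eq_zero_of_vanish_poly
    intro p
    rw [Derivation.commutator_apply, hext.1, hext.2, hext.1, hext.2, pderiv_comm', sub_self]
  rw [Derivation.commutator_apply, sub_eq_zero] at h
  exact h

/-- For `H, R, F ∈ K` with `dF ∧ dR = 0`, the triple
`(dH + (F - H²/2) dR, H dR, dR)` is a projective triple. -/
theorem riccati_pullback_projTriple (dx dy : Derivation ℂ RatF RatF)
    (hext : ExtendsPartials dx dy) (H R F : RatF)
    (hFR : wedge (d0 dx dy F) (d0 dx dy R) = 0) :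
    IsProjTriple dx dy (d0 dx dy H + (F - H ^ 2 / 2) • d0 dx dy R)
      (H • d0 dx dy R) (d0 dx dy R) := by
  have hR := mixed_partials dx dy hext R
  have hH := mixed_partials dx dy hext H
  have h2 : (2 : RatF) = 1 + 1 := by norm_num
  have hc2x : dx ((2 : RatF)⁻¹) = 0 := by
    have : ((2 : RatF))⁻¹ = (1 : RatF) / 2 := by ring
    rw [this, Derivation.leibniz_div, h2]
    simp
  have hc2y : dy ((2 : RatF)⁻¹) = 0 := by
    have : ((2 : RatF))⁻¹ = (1 : RatF) / 2 := by ring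
    rw [this, Derivation.leibniz_div, h2]
    simp
  have hFR' : dx F * dy R - dy F * dx R = 0 := hFR
  refine ⟨?_, ?_, ?_⟩ <;>
  · show _ - _ = _
    simp only [d0, wedge, Prod.fst_add, Prod.snd_add, Prod.smul_fst, Prod.smul_snd,
      smul_eq_mul, map_add, Derivation.leibniz, div_eq_mul_inv, map_sub, map_mul,
      Derivation.leibniz_pow, hc2x, hc2y, hR, hH]
    try ring_nf
    try first
    | linear_combination hFR'
    | linear_combination -hFR'
    | linear_combination 2 * hFR'
    | linear_combination -2 * hFR'
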